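/- Let M be the operator on the algebraic q-Fock space defined by MΩ = Ω and M(f₁⊗⋯⊗f_n) = ∑_{k=1}^n q^{k−1} f_k⊗f₁⊗⋯⊗f_{k−1}⊗f_{k+1}⊗⋯⊗f_n. Then for |q| < 1 and any i, the identity a_i = b_i ∘ M holds on each n-particle space, where b_i is the free (q = 0) annihilator b_i(f₁⊗⋯⊗f_n) = ⟨f₁, e_i⟩ f₂⊗⋯⊗f_n. -/

import Mathlib

open scoped InnerProductSpace TensorProduct
open PiTensorProduct

/-- On each `(n+1)`-particle space of the algebraic `q`-Fock space, the
`q`-annihilator `a(e)` factors as `a(e) = b(e) ∘ M`, where `b(e)` is the free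
(`q = 0`) annihilator `b(e)(f₁⊗⋯⊗f_{n+1}) = ⟨f₁, e⟩ f₂⊗⋯⊗f_{n+1}` and `M` is
the operator
`M(f₁⊗⋯⊗f_{n+1}) = ∑_k q^{k−1} f_k ⊗ f₁ ⊗ ⋯ f̂_k ⋯ ⊗ f_{n+1}`.
Concretely, applying `B ∘ M` to a simple tensor yields the `q`-annihilator
formula `∑_k q^{k−1} ⟨f_k, e⟩ f₁⊗⋯ f̂_k ⋯⊗f_{n+1}`. -/
theorem q_annihilator_eq_free_annihilator_comp_M
    {H : Type*} [NormedAddCommGroup H] [InnerProductSpace ℂ H]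
    (q : ℝ) (hq : |q| < 1) (e : H) (n : ℕ)
    (B : (⨂[ℂ] _ : Fin (n + 1), H) →ₗ[ℂ] ⨂[ℂ] _ : Fin n, H)
    (hB : ∀ g : Fin (n + 1) → H,
      B (tprod ℂ g) = ⟪e, g 0⟫_ℂ • tprod ℂ (fun j : Fin n => g j.succ))
    (M : (⨂[ℂ] _ : Fin (n + 1), H) →ₗ[ℂ] ⨂[ℂ] _ : Fin (n + 1), H)
    (hM : ∀ f : Fin (n + 1) → H,
      M (tprod ℂ f) = ∑ k : Fin (n + 1), ((q : ℂ) ^ (k : ℕ)) •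
        PiTensorProduct.tprod ℂ (Fin.cons (f k) (fun j : Fin n => f (k.succAbove j)))) :
    ∀ f : Fin (n + 1) → H,
      B (M (tprod ℂ f))
        = ∑ k : Fin (n + 1), ((q : ℂ) ^ (k : ℕ) * ⟪e, f k⟫_ℂ) •
            tprod ℂ (fun j : Fin n => f (k.succAbove j)) := by
  intro f
  rw [hM, map_sum]
  refine Finset.sum_congr rfl fun k _ => ?_
  rw [map_smul, hB]
  simp [smul_smul]
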